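/- For every k ∈ ℕ, every depth-k local policy π, and every local state x ∈ X: ν^D_k(π)(x) ≤ Q̂_k(x, π(ε)). Consequently, for any nonnegative b0 : X → ℝ summing to 1 and any horizon h, the influence-optimistic Q-Dec-POMDP bound is at most the influence-optimistic Q-MMDP bound: sup_π Σ_x b0(x)·ν^D_h(π)(x) ≤ max_{a∈A} Σ_x b0(x)·Q̂_h(x,a). -/

import Mathlib

open Finset

section LocalModel

variable {Xl Xn A O U : Type*}
  [Fintype Xl] [Nonempty Xl] [Fintype Xn] [Nonempty Xn]
  [Fintype A] [Nonempty A] [Fintype O] [Nonempty O] [Fintype U] [Nonempty U]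

/-- Influence-optimistic plan-time (Dec-POMDP) value vectors `ν^D_k(π)(x)`. A depth-`k`
local policy is a function `List O → A`; `π []` is its action at the empty history and
`fun h => π (o :: h)` is the subtree policy `π↓o`. -/
noncomputable def nuD (Pl : Xl → (Xl × Xn) → A → ℝ) (Pn : Xn → (Xl × Xn) → A → U → ℝ)
    (Ω : O → A → (Xl × Xn) → ℝ) (r : A → (Xl × Xn) → ℝ) :
    ℕ → (List O → A) → (Xl × Xn) → ℝ
  | 0 => fun _ _ => 0
  | k + 1 => fun π x =>
      r (π []) x +
        Finset.univ.sup' Finset.univ_nonempty (fun u : U =>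
          ∑ o : O, ∑ x' : Xl × Xn,
            Ω o (π []) x' * Pl x'.1 x (π []) * Pn x'.2 x (π []) u *
              nuD Pl Pn Ω r k (fun h => π (o :: h)) x')

/-- Influence-optimistic Q-MMDP values `Q̂_k(x,a)` with reward `R(x,a,x') := r(a,x)`. -/
noncomputable def QhatR (Pl : Xl → (Xl × Xn) → A → ℝ) (Pn : Xn → (Xl × Xn) → A → U → ℝ)
    (r : A → (Xl × Xn) → ℝ) :
    ℕ → (Xl × Xn) → A → ℝ
  | 0 => fun _ _ => 0
  | k + 1 => fun x a =>
      r a x +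
        Finset.univ.sup' Finset.univ_nonempty (fun u : U =>
          ∑ x' : Xl × Xn, Pl x'.1 x a * Pn x'.2 x a u *
            Finset.univ.sup' Finset.univ_nonempty (fun a' : A => QhatR Pl Pn r k x' a'))

/-- the influence-optimistic plan-time (Dec-POMDP) vectors are pointwise
at most the influence-optimistic Q-MMDP values at the policy's first action;
consequently the IO-Q-Dec-POMDP bound is at most the IO-Q-MMDP bound for any initial
belief and horizon. -/
theorem nuD_le_QhatR
    (Pl : Xl → (Xl × Xn) → A → ℝ) (Pn : Xn → (Xl × Xn) → A → U → ℝ)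
    (Ω : O → A → (Xl × Xn) → ℝ) (r : A → (Xl × Xn) → ℝ)
    (hPl0 : ∀ x'l x a, 0 ≤ Pl x'l x a) (hPl1 : ∀ x a, ∑ x'l : Xl, Pl x'l x a = 1)
    (hPn0 : ∀ x'n x a u, 0 ≤ Pn x'n x a u) (hPn1 : ∀ x a u, ∑ x'n : Xn, Pn x'n x a u = 1)
    (hΩ0 : ∀ o a x', 0 ≤ Ω o a x') (hΩ1 : ∀ a x', ∑ o : O, Ω o a x' = 1) :
    (∀ (k : ℕ) (π : List O → A) (x : Xl × Xn),
        nuD Pl Pn Ω r k π x ≤ QhatR Pl Pn r k x (π [])) ∧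
      ∀ (b0 : Xl × Xn → ℝ), (∀ x, 0 ≤ b0 x) → (∑ x : Xl × Xn, b0 x = 1) → ∀ h : ℕ,
        (⨆ π : List O → A, ∑ x : Xl × Xn, b0 x * nuD Pl Pn Ω r h π x) ≤
          Finset.univ.sup' Finset.univ_nonempty
            (fun a : A => ∑ x : Xl × Xn, b0 x * QhatR Pl Pn r h x a) := by
  have main : ∀ (k : ℕ) (π : List O → A) (x : Xl × Xn),
      nuD Pl Pn Ω r k π x ≤ QhatR Pl Pn r k x (π []) := by
    intro k
    induction k with
    | zero => intro π x; simp [nuD, QhatR]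
    | succ k ih =>
      intro π x
      simp only [nuD, QhatR]
      apply add_le_add_right
      apply Finset.sup'_le
      intro u _
      refine le_trans ?_ (Finset.le_sup' (fun u : U =>
        ∑ x' : Xl × Xn, Pl x'.1 x (π []) * Pn x'.2 x (π []) u *
          Finset.univ.sup' Finset.univ_nonempty (fun a' : A => QhatR Pl Pn r k x' a'))
        (Finset.mem_univ u))
      set M : Xl × Xn → ℝ :=
        fun x' => Finset.univ.sup' Finset.univ_nonempty (fun a' : A => QhatR Pl Pn r k x' a')
        with hM
      have step1 : (∑ o : O, ∑ x' : Xl × Xn,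
          Ω o (π []) x' * Pl x'.1 x (π []) * Pn x'.2 x (π []) u *
            nuD Pl Pn Ω r k (fun h => π (o :: h)) x') ≤
          ∑ o : O, ∑ x' : Xl × Xn,
            Ω o (π []) x' * Pl x'.1 x (π []) * Pn x'.2 x (π []) u * M x' := by
        refine Finset.sum_le_sum fun o _ => Finset.sum_le_sum fun x' _ => ?_
        refine mul_le_mul_of_nonneg_left ?_
          (mul_nonneg (mul_nonneg (hΩ0 _ _ _) (hPl0 _ _ _)) (hPn0 _ _ _ _))
        exact le_trans (ih _ _)
          (Finset.le_sup' (fun a' : A => QhatR Pl Pn r k x' a') (Finset.mem_univ _))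
      refine step1.trans (le_of_eq ?_)
      rw [Finset.sum_comm]
      refine Finset.sum_congr rfl fun x' _ => ?_
      have hterm : ∀ o : O, Ω o (π []) x' * Pl x'.1 x (π []) * Pn x'.2 x (π []) u * M x'
          = Ω o (π []) x' * (Pl x'.1 x (π []) * Pn x'.2 x (π []) u * M x') := fun o => by ring
      simp_rw [hterm]
      rw [← Finset.sum_mul, hΩ1, one_mul]
  refine ⟨main, ?_⟩
  intro b0 hb0 _ h
  refine ciSup_le fun π => ?_
  refine le_trans (Finset.sum_le_sum fun x _ =>
      mul_le_mul_of_nonneg_left (main h π x) (hb0 x)) ?_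
  exact Finset.le_sup' (fun a : A => ∑ x : Xl × Xn, b0 x * QhatR Pl Pn r h x a)
    (Finset.mem_univ (π []))

end LocalModel
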